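/- arXiv:1709.03932 — 3 statements merged into one kernel-verified Lean document; each statement's English description precedes it below -/
import Mathlib

section
/- Let m ≥ 1 and let n_1, …, n_m be positive integers with n = n_1 + … + n_m ≥ 2 and e = Σ_{1≤i<j≤m} n_i n_j. Then for every induced subgraph H of the complete m-partite graph K_{n_1,…,n_m} with at least 2 vertices, one has ⌈|E(H)| / (|V(H)| − 1)⌉ ≤ ⌈e / (n − 1)⌉; that is, the maximum of ⌈|E(H)|/(|V(H)|−1)⌉ over induced subgraphs H is attained at H = K_{n_1,…,n_m} itself. -/
open SimpleGraph Finset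

/-- The number of edges of a complete multipartite graph with part sizes `x`. -/
def Fs (m : ℕ) (x : Fin m → ℕ) : ℕ := ∑ a, ∑ b ∈ Finset.Ioi a, x a * x b

lemma sum_split (m : ℕ) (f : Fin m → ℕ) (i : Fin m) :
    ∑ j, f j = f i + ∑ j ∈ ({i}ᶜ : Finset (Fin m)), f j := by
  have h := Finset.sum_compl_add_sum ({i} : Finset (Fin m)) f
  rw [Finset.sum_singleton] at h
  omega

lemma le_sum (m : ℕ) (f : Fin m → ℕ) (i : Fin m) : f i ≤ ∑ j, f j :=
  Finset.single_le_sum (fun _ _ => Nat.zero_le _) (Finset.mem_univ i)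

lemma sum_compl_eq (m : ℕ) (f : Fin m → ℕ) (i : Fin m) :
    ∑ j ∈ ({i}ᶜ : Finset (Fin m)), f j = (∑ j, f j) - f i := by
  have := sum_split m f i
  omega

/-- `2 * Fs x = ∑_i x i * (K - x i)` where `K = ∑ x`. -/
lemma two_mul_F (m : ℕ) (x : Fin m → ℕ) :
    2 * Fs m x = ∑ i, x i * ((∑ j, x j) - x i) := by
  have h := Finset.sum_sum_Ioi_add_eq_sum_sum_off_diag (fun j i : Fin m => x j * x i)
  calc 2 * Fs m x = ∑ i, ∑ j ∈ Finset.Ioi i, (x j * x i + x i * x j) := by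
        unfold Fs
        simp only [Finset.mul_sum]
        exact Finset.sum_congr rfl fun i _ => Finset.sum_congr rfl fun j _ => by ring
    _ = ∑ i, ∑ j ∈ ({i}ᶜ : Finset (Fin m)), x j * x i := h.trans (by congr!)
    _ = ∑ i, x i * ((∑ j, x j) - x i) := by
        refine Finset.sum_congr rfl fun i _ => ?_
        rw [← Finset.sum_mul, sum_compl_eq, mul_comm]

/-- Key bound: `Fs x ≤ (K - x i) * (K - 1)`. -/
lemma F_le (m : ℕ) (x : Fin m → ℕ) (i : Fin m) :
    Fs m x ≤ ((∑ j, x j) - x i) * ((∑ j, x j) - 1) := by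
  have key : 2 * Fs m x ≤ 2 * (((∑ j, x j) - x i) * ((∑ j, x j) - 1)) := by
    rw [two_mul_F]
    have hterm : ∀ j : Fin m, x j * ((∑ j, x j) - x j) ≤ x j * ((∑ j, x j) - 1) := by
      intro j
      rcases Nat.eq_zero_or_pos (x j) with h | h
      · simp [h]
      · have hxj := le_sum m x j
        apply Nat.mul_le_mul_left
        omega
    calc ∑ j, x j * ((∑ j, x j) - x j)
        = x i * ((∑ j, x j) - x i)
            + ∑ j ∈ ({i}ᶜ : Finset (Fin m)), x j * ((∑ j, x j) - x j) :=
          sum_split m (fun j => x j * ((∑ j, x j) - x j)) i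
      _ ≤ ((∑ j, x j) - 1) * ((∑ j, x j) - x i)
            + ∑ j ∈ ({i}ᶜ : Finset (Fin m)), x j * ((∑ j, x j) - 1) := by
          refine Nat.add_le_add ?_ (Finset.sum_le_sum fun j _ => hterm j)
          rcases Nat.eq_or_lt_of_le (le_sum m x i) with h | h
          · rw [h, Nat.sub_self, Nat.mul_zero, Nat.mul_zero]
          · have hle1 : x i ≤ (∑ j, x j) - 1 := by omega
            exact Nat.mul_le_mul_right _ hle1
      _ = ((∑ j, x j) - 1) * ((∑ j, x j) - x i)
            + ((∑ j, x j) - x i) * ((∑ j, x j) - 1) := by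
          rw [← Finset.sum_mul, sum_compl_eq]
      _ = 2 * (((∑ j, x j) - x i) * ((∑ j, x j) - 1)) := by ring
  omega

/-- Step identity: incrementing coordinate `i` adds `K - x i` to `Fs`. -/
lemma F_update (m : ℕ) (x : Fin m → ℕ) (i : Fin m) :
    Fs m (Function.update x i (x i + 1)) = Fs m x + ((∑ j, x j) - x i) := by
  set x' := Function.update x i (x i + 1) with hx'
  have hx'i : x' i = x i + 1 := by rw [hx', Function.update_self]
  have hx'j : ∀ j, j ≠ i → x' j = x j := fun j hj => Function.update_of_ne hj _ _
  have hcompl' : ∑ j ∈ ({i}ᶜ : Finset (Fin m)), x' j = ∑ j ∈ ({i}ᶜ : Finset (Fin m)), x j :=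
    Finset.sum_congr rfl fun j hj => hx'j j (by simpa using hj)
  have hs1 := sum_split m x' i
  have hs2 := sum_split m x i
  have hsum' : ∑ j, x' j = (∑ j, x j) + 1 := by omega
  have hle : ∀ j, x j ≤ ∑ j, x j := le_sum m x
  have h2 : 2 * Fs m x' = 2 * (Fs m x + ((∑ j, x j) - x i)) := by
    rw [two_mul_F, hsum']
    have hmain := two_mul_F m x
    have hsplitx : ∑ j, x j * ((∑ j, x j) - x j)
        = x i * ((∑ j, x j) - x i)
          + ∑ j ∈ ({i}ᶜ : Finset (Fin m)), x j * ((∑ j, x j) - x j) :=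
      sum_split m (fun j => x j * ((∑ j, x j) - x j)) i
    have hsplitx' : ∑ j, x' j * ((∑ j, x j) + 1 - x' j)
        = x' i * ((∑ j, x j) + 1 - x' i)
          + ∑ j ∈ ({i}ᶜ : Finset (Fin m)), x' j * ((∑ j, x j) + 1 - x' j) :=
      sum_split m (fun j => x' j * ((∑ j, x j) + 1 - x' j)) i
    have hterm_i : x' i * ((∑ j, x j) + 1 - x' i) = x i * ((∑ j, x j) - x i) + ((∑ j, x j) - x i) := by
      rw [hx'i]
      have : (∑ j, x j) + 1 - (x i + 1) = (∑ j, x j) - x i := by omega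
      rw [this, Nat.succ_mul]
    have hterm_rest : ∑ j ∈ ({i}ᶜ : Finset (Fin m)), x' j * ((∑ j, x j) + 1 - x' j)
        = (∑ j ∈ ({i}ᶜ : Finset (Fin m)), x j * ((∑ j, x j) - x j))
          + ∑ j ∈ ({i}ᶜ : Finset (Fin m)), x j := by
      rw [← Finset.sum_add_distrib]
      refine Finset.sum_congr rfl fun j hj => ?_
      have hji : j ≠ i := by simpa using hj
      rw [hx'j j hji]
      have : (∑ j, x j) + 1 - x j = ((∑ j, x j) - x j) + 1 := by have := hle j; omega
      rw [this, Nat.mul_succ]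
    have hcompl : ∑ j ∈ ({i}ᶜ : Finset (Fin m)), x j = (∑ j, x j) - x i := sum_compl_eq m x i
    omega
  omega

/-- Monotonicity of `Fs`. -/
lemma F_mono (m : ℕ) (x y : Fin m → ℕ) (h : ∀ i, x i ≤ y i) : Fs m x ≤ Fs m y :=
  Finset.sum_le_sum fun a _ => Finset.sum_le_sum fun b _ => Nat.mul_le_mul (h a) (h b)

/-- The main combinatorial inequality. -/
lemma main_ineq (m : ℕ) (nn : Fin m → ℕ) :
    ∀ d : ℕ, ∀ x : Fin m → ℕ, (∀ i, x i ≤ nn i) → (∑ i, nn i) - (∑ i, x i) = d →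
      2 ≤ ∑ i, x i →
      Fs m x * ((∑ i, nn i) - 1) ≤ Fs m nn * ((∑ i, x i) - 1) := by
  intro d
  induction d with
  | zero =>
    intro x hx hd _
    have hsum : ∑ i, x i = ∑ i, nn i := by
      have := Finset.sum_le_sum (s := Finset.univ) (fun i _ => hx i)
      omega
    rw [hsum]
    exact Nat.mul_le_mul_right _ (F_mono m x nn hx)
  | succ d ih =>
    intro x hx hd hx2
    have hle := Finset.sum_le_sum (s := Finset.univ) (fun i _ => hx i)
    have hex : ∃ i, x i < nn i := by
      by_contra hc
      push_neg at hc
      have := Finset.sum_le_sum (s := Finset.univ) (fun i _ => hc i)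
      omega
    obtain ⟨i, hi⟩ := hex
    set x' := Function.update x i (x i + 1) with hx'
    have hx'le : ∀ j, x' j ≤ nn j := by
      intro j
      by_cases hji : j = i
      · subst hji; rw [hx', Function.update_self]; omega
      · rw [hx', Function.update_of_ne hji]; exact hx j
    have hcompl' : ∑ j ∈ ({i}ᶜ : Finset (Fin m)), x' j = ∑ j ∈ ({i}ᶜ : Finset (Fin m)), x j :=
      Finset.sum_congr rfl fun j hj => Function.update_of_ne (by simpa using hj) _ _
    have hs1 := sum_split m x' i
    have hs2 := sum_split m x i
    have hx'i : x' i = x i + 1 := by rw [hx', Function.update_self]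
    have hsum' : ∑ j, x' j = (∑ j, x j) + 1 := by omega
    have hIH := ih x' hx'le (by omega) (by omega)
    rw [hsum'] at hIH
    have hsucc : (∑ j, x j) + 1 - 1 = ∑ j, x j := by omega
    rw [hsucc] at hIH
    -- step inequality : Fs x * K ≤ Fs x' * (K - 1)
    have hstep : Fs m x * (∑ j, x j) ≤ Fs m x' * ((∑ j, x j) - 1) := by
      rw [hx', F_update]
      have hb := F_le m x i
      have hFK : Fs m x * (∑ j, x j) = Fs m x * ((∑ j, x j) - 1) + Fs m x := by
        have hK' : (∑ j, x j) - 1 + 1 = ∑ j, x j := by omega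
        conv_lhs => rw [← hK']
        rw [Nat.mul_succ]
      rw [hFK, Nat.add_mul]
      exact Nat.add_le_add_left hb _
    have h1 : Fs m x * (∑ j, x j) * ((∑ i, nn i) - 1)
        ≤ Fs m nn * (∑ j, x j) * ((∑ j, x j) - 1) := by
      calc Fs m x * (∑ j, x j) * ((∑ i, nn i) - 1)
          ≤ Fs m x' * ((∑ j, x j) - 1) * ((∑ i, nn i) - 1) :=
            Nat.mul_le_mul_right _ hstep
        _ = (Fs m x' * ((∑ i, nn i) - 1)) * ((∑ j, x j) - 1) := by ring
        _ ≤ (Fs m nn * (∑ j, x j)) * ((∑ j, x j) - 1) := Nat.mul_le_mul_right _ hIH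
        _ = Fs m nn * (∑ j, x j) * ((∑ j, x j) - 1) := by ring
    have h2 : Fs m x * ((∑ i, nn i) - 1) * (∑ j, x j)
        ≤ Fs m nn * ((∑ j, x j) - 1) * (∑ j, x j) := by
      calc Fs m x * ((∑ i, nn i) - 1) * (∑ j, x j)
          = Fs m x * (∑ j, x j) * ((∑ i, nn i) - 1) := by ring
        _ ≤ Fs m nn * (∑ j, x j) * ((∑ j, x j) - 1) := h1
        _ = Fs m nn * ((∑ j, x j) - 1) * (∑ j, x j) := by ring
    exact Nat.le_of_mul_le_mul_right h2 (by omega)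

/-- For every induced subgraph `H` (on a vertex set `s` with at least 2 vertices)
of the complete `m`-partite graph `K_{n_1,…,n_m}`, one has
`⌈|E(H)|/(|V(H)|-1)⌉ ≤ ⌈e/(n-1)⌉`. -/
theorem induced_density_le_completeMultipartite (m : ℕ) (hm : 1 ≤ m)
    (nn : Fin m → ℕ) (hpos : ∀ i, 0 < nn i)
    (n : ℕ) (hn : n = ∑ i, nn i) (hn2 : 2 ≤ n)
    (e : ℕ) (he : e = ∑ i, ∑ j ∈ Finset.Ioi i, nn i * nn j)
    (s : Set (Σ i : Fin m, Fin (nn i))) (hs : 2 ≤ s.ncard) :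
    ⌈((((completeMultipartiteGraph fun i => Fin (nn i)).induce s).edgeSet.ncard : ℚ)) /
        ((s.ncard : ℚ) - 1)⌉₊ ≤ ⌈(e : ℚ) / ((n : ℚ) - 1)⌉₊ := by
  classical
  set G := completeMultipartiteGraph fun i => Fin (nn i) with hG
  haveI : Fintype ↥s := s.toFinite.fintype
  set t : Finset (Σ i : Fin m, Fin (nn i)) := s.toFinset with ht
  set k : Fin m → ℕ := fun i => #(t.filter fun v => v.1 = i) with hk
  have hKt : s.ncard = t.card := Set.ncard_eq_toFinset_card' s
  have hKsum : t.card = ∑ i, k i :=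
    Finset.card_eq_sum_card_fiberwise (fun v _ => Finset.mem_univ v.1)
  have hki : ∀ i, k i ≤ nn i := by
    intro i
    have hsub : t.filter (fun v => v.1 = i) ⊆ Finset.univ.image (Sigma.mk i) := by
      intro v hv
      obtain ⟨j, b⟩ := v
      have hj : j = i := (Finset.mem_filter.mp hv).2
      subst hj
      exact Finset.mem_image.mpr ⟨b, Finset.mem_univ b, rfl⟩
    calc k i ≤ #(Finset.univ.image (Sigma.mk i)) := Finset.card_le_card hsub
      _ ≤ #(Finset.univ : Finset (Fin (nn i))) := Finset.card_image_le
      _ = nn i := by simp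
  -- edge count
  have hedge : (G.induce s).edgeSet.ncard = Fs m k := by
    have hdeg : ∀ v : ↥s, (G.induce s).degree v = t.card - k (v.1.1) := by
      intro v
      rw [SimpleGraph.degree, SimpleGraph.neighborFinset_eq_filter]
      have hcard : #(Finset.univ.filter fun w : ↥s => (G.induce s).Adj v w)
          = #(t.filter fun w => ¬ w.1 = v.1.1) := by
        refine Finset.card_bij (fun w _ => w.1) ?_ ?_ ?_
        · intro w hw
          have hadj : (G.induce s).Adj v w := (Finset.mem_filter.mp hw).2
          have hne : ¬ (v.1.1 = w.1.1) := hadj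
          refine Finset.mem_filter.mpr ⟨?_, fun hc => hne hc.symm⟩
          exact Set.mem_toFinset.mpr w.2
        · intro a _ b _ hab
          exact Subtype.ext hab
        · intro u hu
          have hu1 : u ∈ s := Set.mem_toFinset.mp (Finset.mem_filter.mp hu).1
          have hu2 : ¬ u.1 = v.1.1 := (Finset.mem_filter.mp hu).2
          refine ⟨⟨u, hu1⟩, ?_, rfl⟩
          refine Finset.mem_filter.mpr ⟨Finset.mem_univ _, ?_⟩
          exact fun hc => hu2 hc.symm
      rw [hcard]
      have hpart := Finset.card_filter_add_card_filter_not
        (s := t) (p := fun w : (Σ i : Fin m, Fin (nn i)) => w.1 = v.1.1)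
      have hkv : #(t.filter fun w : (Σ i : Fin m, Fin (nn i)) => w.1 = v.1.1) = k (v.1.1) := rfl
      omega
    have hhand := SimpleGraph.sum_degrees_eq_twice_card_edges (G.induce s)
    have hsumdeg : ∑ v : ↥s, (G.induce s).degree v = ∑ i, k i * (t.card - k i) := by
      calc ∑ v : ↥s, (G.induce s).degree v
          = ∑ v : ↥s, (t.card - k (v.1.1)) := Finset.sum_congr rfl fun v _ => hdeg v
        _ = ∑ v ∈ t, (t.card - k v.1) :=
            Finset.sum_set_coe (f := fun v : (Σ i : Fin m, Fin (nn i)) => t.card - k v.1) s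
        _ = ∑ i, ∑ v ∈ t.filter (fun v => v.1 = i), (t.card - k v.1) :=
            (Finset.sum_fiberwise_of_maps_to (fun v _ => Finset.mem_univ v.1) _).symm
        _ = ∑ i, k i * (t.card - k i) := by
            refine Finset.sum_congr rfl fun i _ => ?_
            have hcst : ∀ v ∈ t.filter (fun v => v.1 = i), t.card - k v.1 = t.card - k i :=
              fun v hv => by rw [(Finset.mem_filter.mp hv).2]
            rw [Finset.sum_congr rfl hcst, Finset.sum_const, smul_eq_mul]
    have h2F : 2 * Fs m k = ∑ i, k i * (t.card - k i) := by
      rw [two_mul_F, ← hKsum]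
    have hncard : (G.induce s).edgeSet.ncard = #(G.induce s).edgeFinset := by
      rw [← SimpleGraph.coe_edgeFinset, Set.ncard_coe_finset]
    omega
  -- numeric part
  have hsK : s.ncard = ∑ i, k i := hKt.trans hKsum
  have hKs : 2 ≤ ∑ i, k i := hsK ▸ hs
  have hnat := main_ineq m nn ((∑ i, nn i) - (∑ i, k i)) k hki rfl hKs
  rw [← hn] at hnat
  have hek : Fs m k * (n - 1) ≤ e * ((∑ i, k i) - 1) := by
    rw [he]; exact hnat
  rw [hedge, hsK]
  have hd1 : (0 : ℚ) < ((∑ i, k i : ℕ) : ℚ) - 1 := by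
    have : (2 : ℚ) ≤ ((∑ i, k i : ℕ) : ℚ) := by exact_mod_cast hKs
    linarith
  have hd2 : (0 : ℚ) < (n : ℚ) - 1 := by
    have : (2 : ℚ) ≤ (n : ℚ) := by exact_mod_cast hn2
    linarith
  refine Nat.ceil_le_ceil ?_
  rw [div_le_div_iff₀ hd1 hd2]
  have hcast1 : ((∑ i, k i : ℕ) : ℚ) - 1 = (((∑ i, k i) - 1 : ℕ) : ℚ) := by
    rw [Nat.cast_sub (by omega)]; norm_num
  have hcast2 : ((n : ℚ)) - 1 = ((n - 1 : ℕ) : ℚ) := by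
    rw [Nat.cast_sub (by omega)]; norm_num
  rw [hcast1, hcast2]
  exact_mod_cast hek
end

section
/- Let m ≥ 1 and let k_1, …, k_m and n_1, …, n_m be natural numbers with k_i ≤ n_i for all i, with Σ k_i ≥ 2 and n = Σ n_i. Then (Σ_{1≤i<j≤m} k_i k_j) · (n − 1) ≤ (Σ_{1≤i<j≤m} n_i n_j) · ((Σ k_i) − 1). (Equivalently, the edge density |E(H)|/(|V(H)|−1) of an induced subgraph H of the complete m-partite graph K_{n_1,…,n_m} is at most e/(n−1).) -/
open Finset

private lemma step_ineq (Ek Ek' Q S a : ℕ) (h1 : 2*Ek + Q = S*S) (h2 : Ek' + a = Ek + S)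
    (h3 : S + a*a ≤ Q + a) (h4 : a ≤ S) (h5 : 2 ≤ S) : Ek * S ≤ Ek' * (S - 1) := by
  have hx : (S - a) ≤ (S - a) * (S - a) := by
    have := Nat.le_self_pow (two_ne_zero) (S - a)
    rwa [pow_two] at this
  zify [show 1 ≤ S by omega, h4] at *
  nlinarith [hx, h1, h2, h3, h4]

private lemma pair_sum_sq {m : ℕ} (f : Fin m → ℕ) :
    2 * (∑ i, ∑ j ∈ Finset.Ioi i, f i * f j) + ∑ i, f i * f i
      = (∑ i, f i) * (∑ i, f i) := by
  have h := Finset.sum_sum_Ioi_add_eq_sum_sum_off_diag (fun i j : Fin m => f i * f j)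
  have h1 : 2 * (∑ i, ∑ j ∈ Finset.Ioi i, f i * f j)
      = ∑ i, ∑ j ∈ Finset.Ioi i, (f j * f i + f i * f j) := by
    rw [Finset.mul_sum]
    refine Finset.sum_congr rfl fun i _ => ?_
    rw [Finset.mul_sum]
    exact Finset.sum_congr rfl fun j _ => by ring
  rw [h1, h, ← Finset.sum_add_distrib]
  have h5 : (∑ i, f i) * (∑ i, f i) = ∑ i, ∑ j, f j * f i := by
    rw [Finset.mul_sum]
    exact Finset.sum_congr rfl fun i _ => by rw [Finset.sum_mul]
  rw [h5]
  refine Finset.sum_congr rfl fun i _ => ?_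
  have h4 := Finset.sum_add_sum_compl ({i} : Finset (Fin m)) (fun j => f j * f i)
  simp only [Finset.sum_singleton] at h4
  rw [add_comm] at h4
  convert h4 using 3

/-- If `k_i ≤ n_i` for all `i` and `Σ k_i ≥ 2`, then
`(Σ_{i<j} k_i k_j) · (n − 1) ≤ (Σ_{i<j} n_i n_j) · ((Σ k_i) − 1)`,
where `n = Σ n_i`. -/
theorem multipartite_density_ineq (m : ℕ) (hm : 1 ≤ m) (k nn : Fin m → ℕ)
    (hk : ∀ i, k i ≤ nn i) (hksum : 2 ≤ ∑ i, k i) :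
    (∑ i, ∑ j ∈ Finset.Ioi i, k i * k j) * ((∑ i, nn i) - 1) ≤
      (∑ i, ∑ j ∈ Finset.Ioi i, nn i * nn j) * ((∑ i, k i) - 1) := by
  have key : ∀ d (k : Fin m → ℕ), (∀ i, k i ≤ nn i) → 2 ≤ ∑ i, k i →
      (∑ i, (nn i - k i)) = d →
      (∑ i, ∑ j ∈ Finset.Ioi i, k i * k j) * ((∑ i, nn i) - 1) ≤
        (∑ i, ∑ j ∈ Finset.Ioi i, nn i * nn j) * ((∑ i, k i) - 1) := by
    intro d
    induction d with
    | zero =>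
      intro k hk _ hd
      have hke : k = nn := by
        funext i
        have h0 : nn i - k i = 0 := by
          have := Finset.sum_eq_zero_iff.mp hd i (Finset.mem_univ i)
          omega
        have := hk i
        omega
      rw [hke]
    | succ d ih =>
      intro k hk hks hd
      -- find a coordinate where k i < nn i
      have hex : ∃ i, k i < nn i := by
        by_contra hcon
        push_neg at hcon
        have : ∀ i, nn i - k i = 0 := fun i => by have := hcon i; omega
        simp [this] at hd
      obtain ⟨i, hilt⟩ := hex
      set k' : Fin m → ℕ := Function.update k i (k i + 1) with hk'def
      have split : ∀ (F : Fin m → ℕ → ℕ),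
          ∑ j, F j (k' j) = F i (k i + 1) + ∑ j ∈ Finset.univ.erase i, F j (k j) := by
        intro F
        rw [← Finset.add_sum_erase _ (fun j => F j (k' j)) (Finset.mem_univ i)]
        congr 1
        · simp [hk'def]
        · refine Finset.sum_congr rfl fun j hj => ?_
          have hji : j ≠ i := Finset.ne_of_mem_erase hj
          simp [hk'def, Function.update_of_ne hji]
      have splitk : ∀ (F : Fin m → ℕ → ℕ),
          ∑ j, F j (k j) = F i (k i) + ∑ j ∈ Finset.univ.erase i, F j (k j) := by
        intro F
        rw [← Finset.add_sum_erase _ (fun j => F j (k j)) (Finset.mem_univ i)]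
      -- basic sums
      have hs' : ∑ j, k' j = (∑ j, k j) + 1 := by
        have h1 := split (fun _ x => x)
        have h2 := splitk (fun _ x => x)
        omega
      have hq' : ∑ j, k' j * k' j = (∑ j, k j * k j) + 2 * k i + 1 := by
        have h1 := split (fun _ x => x * x)
        have h2 := splitk (fun _ x => x * x)
        have : (k i + 1) * (k i + 1) = k i * k i + 2 * k i + 1 := by ring
        omega
      have hk'le : ∀ j, k' j ≤ nn j := by
        intro j
        by_cases hji : j = i
        · subst hji; simp [hk'def]; omega
        · simp [hk'def, Function.update_of_ne hji]; exact hk j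
      have hd' : ∑ j, (nn j - k' j) = d := by
        have h1 := split (fun j x => nn j - x)
        have h2 := splitk (fun j x => nn j - x)
        omega
      have hks' : 2 ≤ ∑ j, k' j := by omega
      have IH := ih k' hk'le hks' hd'
      -- notation
      set Ek := ∑ a, ∑ b ∈ Finset.Ioi a, k a * k b with hEk
      set Ek' := ∑ a, ∑ b ∈ Finset.Ioi a, k' a * k' b with hEk'
      set En := ∑ a, ∑ b ∈ Finset.Ioi a, nn a * nn b with hEn
      set S := ∑ j, k j with hS
      set N := ∑ j, nn j with hN
      have idk : 2 * Ek + ∑ j, k j * k j = S * S := pair_sum_sq k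
      have idk' : 2 * Ek' + ∑ j, k' j * k' j = (S + 1) * (S + 1) := by
        rw [← hs']; exact pair_sum_sq k'
      have hkiS : k i ≤ S := Finset.single_le_sum (fun j _ => Nat.zero_le (k j)) (Finset.mem_univ i)
      -- Ek' + k i = Ek + S
      have hE' : Ek' + k i = Ek + S := by
        have hexp : (S + 1) * (S + 1) = S * S + 2 * S + 1 := by ring
        rw [hq'] at idk'
        rw [hexp] at idk'
        omega
      -- Q bound : S + k i * k i ≤ Q + k i
      have hQ : S + k i * k i ≤ (∑ j, k j * k j) + k i := by
        have h1 := splitk (fun _ x => x)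
        have h2 := splitk (fun _ x => x * x)
        have h3 : ∑ j ∈ Finset.univ.erase i, k j ≤ ∑ j ∈ Finset.univ.erase i, k j * k j :=
          Finset.sum_le_sum fun j _ => by nlinarith [Nat.le_self_pow (two_ne_zero) (k j)]
        omega
      have h1 : Ek * S ≤ Ek' * (S - 1) :=
        step_ineq Ek Ek' (∑ j, k j * k j) S (k i) idk hE' hQ hkiS hks
      have h2 : Ek' * (N - 1) ≤ En * S := by
        have : (∑ j, k' j) - 1 = S := by omega
        rw [this] at IH
        exact IH
      have hSpos : 0 < S := by omega
      refine Nat.le_of_mul_le_mul_right ?_ hSpos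
      calc Ek * (N - 1) * S = Ek * S * (N - 1) := by ring
        _ ≤ Ek' * (S - 1) * (N - 1) := Nat.mul_le_mul_right _ h1
        _ = Ek' * (N - 1) * (S - 1) := by ring
        _ ≤ En * S * (S - 1) := Nat.mul_le_mul_right _ h2
        _ = En * (S - 1) * S := by ring
  exact key _ k hk hksum rfl
end

section
/- Let m ≥ 1 and let n_1, …, n_m be positive integers with n = n_1 + … + n_m ≥ 2 and e = Σ_{1≤i<j≤m} n_i n_j. Then the edge set of the complete m-partite graph K_{2n_1, 2n_2, …, 2n_m} can be partitioned into ⌈e/(n−1)⌉ parts, each of which induces a bipartite (hence triangle-free) subgraph. -/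
open SimpleGraph Finset

/-- The edge set of the complete `m`-partite graph `K_{2n_1,…,2n_m}` can be
partitioned into `⌈e/(n-1)⌉` parts, each inducing a bipartite (2-colorable)
subgraph, where `n = Σ n_i` and `e = Σ_{i<j} n_i n_j`. -/
theorem completeMultipartite_even_bipartite_partition (m : ℕ) (hm : 1 ≤ m)
    (nn : Fin m → ℕ) (hpos : ∀ i, 0 < nn i)
    (n : ℕ) (hn : n = ∑ i, nn i) (hn2 : 2 ≤ n)
    (e : ℕ) (he : e = ∑ i, ∑ j ∈ Finset.Ioi i, nn i * nn j) :
    ∃ P : Fin ⌈(e : ℚ) / ((n : ℚ) - 1)⌉₊ → Set (Sym2 (Σ i : Fin m, Fin (2 * nn i))),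
      (Pairwise fun i j => Disjoint (P i) (P j)) ∧
      (⋃ i, P i) = (completeMultipartiteGraph fun i : Fin m => Fin (2 * nn i)).edgeSet ∧
      ∀ i, (SimpleGraph.fromEdgeSet (P i)).Colorable 2 := by
  set k := ⌈(e : ℚ) / ((n : ℚ) - 1)⌉₊ with hkdef
  -- Step 1: (m-1) * n ≤ 2 * e
  have key : (m - 1) * n ≤ 2 * e := by
    have h1 : ∑ i, ∑ j ∈ Ioi i, (nn j * nn i + nn i * nn j) = ∑ i, ∑ j ∈ {i}ᶜ, nn j * nn i := by
      have := Finset.sum_sum_Ioi_add_eq_sum_sum_off_diag (fun j i => nn j * nn i)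
      convert this using 3
    have hL : ∑ i, ∑ j ∈ Ioi i, (nn j * nn i + nn i * nn j) = 2 * e := by
      rw [he, Finset.mul_sum]
      refine Finset.sum_congr rfl fun i _ => ?_
      rw [Finset.mul_sum]
      refine Finset.sum_congr rfl fun j _ => ?_
      ring
    have hR : (m - 1) * n ≤ ∑ i, ∑ j ∈ {i}ᶜ, nn j * nn i := by
      rw [hn, Finset.mul_sum]
      refine Finset.sum_le_sum fun i _ => ?_
      calc (m - 1) * nn i = ∑ _j ∈ ({i}ᶜ : Finset (Fin m)), nn i := by
            rw [Finset.sum_const, smul_eq_mul]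
            congr 1
            simp [Finset.card_compl]
        _ ≤ ∑ j ∈ ({i}ᶜ : Finset (Fin m)), nn j * nn i :=
            Finset.sum_le_sum fun j _ => Nat.le_mul_of_pos_left _ (hpos j)
    omega
  -- Step 2: e ≤ k * (n - 1)
  have hk1 : e ≤ k * (n - 1) := by
    have hnq : (0 : ℚ) < (n : ℚ) - 1 := by
      have : (2 : ℚ) ≤ (n : ℚ) := by exact_mod_cast hn2
      linarith
    have h := Nat.le_ceil ((e : ℚ) / ((n : ℚ) - 1))
    rw [← hkdef, div_le_iff₀ hnq] at h
    have hcast : ((n : ℚ) - 1) = ((n - 1 : ℕ) : ℚ) := by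
      have h1 : (1:ℕ) ≤ n := by omega
      push_cast [h1]
      ring
    rw [hcast] at h
    exact_mod_cast h
  -- Step 3: m ≤ 2 ^ k
  have hmk : m ≤ 2 ^ k := by
    rcases Nat.lt_or_ge m 2 with hm2' | hm2'
    · have : 1 ≤ 2 ^ k := Nat.one_le_two_pow
      omega
    · have hab : (m - 1) * (n - 1) + (m - 1) ≤ (2 * k) * (n - 1) := by
        have h2 : (m - 1) * n = (m - 1) * (n - 1) + (m - 1) := by
          have hn' : (n - 1) + 1 = n := by omega
          calc (m - 1) * n = (m - 1) * ((n - 1) + 1) := by rw [hn']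
            _ = (m - 1) * (n - 1) + (m - 1) := by ring
        calc (m - 1) * (n - 1) + (m - 1) = (m - 1) * n := h2.symm
          _ ≤ 2 * e := key
          _ ≤ 2 * (k * (n - 1)) := Nat.mul_le_mul_left 2 hk1
          _ = (2 * k) * (n - 1) := by ring
      have hlt : (m - 1) * (n - 1) < (2 * k) * (n - 1) := by omega
      have hm1 : m - 1 < 2 * k := Nat.lt_of_mul_lt_mul_right hlt
      have hk1' : 1 ≤ k := by omega
      have h2k : 2 * k ≤ 2 ^ k := by
        calc 2 * k ≤ 2 * 2 ^ (k - 1) := by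
              have := Nat.lt_two_pow_self (n := k - 1); omega
          _ = 2 ^ k := by rw [← pow_succ']; congr 1; omega
      omega
  -- Step 4: an injective labelling
  obtain ⟨f, hf⟩ : ∃ f : Fin m → (Fin k → Bool), Function.Injective f := by
    have : Fintype.card (Fin m) ≤ Fintype.card (Fin k → Bool) := by
      rw [Fintype.card_fin, Fintype.card_fun, Fintype.card_bool, Fintype.card_fin]
      exact hmk
    obtain ⟨f⟩ := Function.Embedding.nonempty_of_card_le this
    exact ⟨f, f.injective⟩
  -- The construction
  refine ⟨fun t => {s : Sym2 (Σ i : Fin m, Fin (2 * nn i)) |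
      ∃ v w : (Σ i : Fin m, Fin (2 * nn i)), s = s(v, w) ∧ v.1 ≠ w.1 ∧
        f v.1 t ≠ f w.1 t ∧ ∀ t' < t, f v.1 t' = f w.1 t'}, ?_, ?_, ?_⟩
  · -- pairwise disjoint
    intro t1 t2 hne
    rw [Set.disjoint_left]
    rintro s ⟨v, w, hs, -, hne1, hmin1⟩ ⟨v', w', hs', -, hne2, hmin2⟩
    rw [hs, Sym2.eq_iff] at hs'
    have hcond : f v.1 t2 ≠ f w.1 t2 ∧ ∀ t' < t2, f v.1 t' = f w.1 t' := by
      rcases hs' with ⟨h1, h2⟩ | ⟨h1, h2⟩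
      · rw [← h1, ← h2] at hne2 hmin2; exact ⟨hne2, hmin2⟩
      · rw [← h1, ← h2] at hne2 hmin2
        exact ⟨fun h => hne2 h.symm, fun t' ht' => (hmin2 t' ht').symm⟩
    rcases lt_trichotomy t1 t2 with h | h | h
    · exact hne1 (hcond.2 t1 h)
    · exact hne h
    · exact hcond.1 (hmin1 t2 h)
  · -- union is the edge set
    ext s
    induction s using Sym2.ind with
    | _ v w =>
      simp only [Set.mem_iUnion, Set.mem_setOf_eq, SimpleGraph.mem_edgeSet]
      constructor
      · rintro ⟨t, v', w', hs', hne', -⟩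
        rw [Sym2.eq_iff] at hs'
        rcases hs' with ⟨h1, h2⟩ | ⟨h1, h2⟩
        · subst h1; subst h2; exact hne'
        · subst h1; subst h2; exact fun h => hne' h.symm
      · intro hadj
        have hadj' : v.1 ≠ w.1 := hadj
        have hfne : f v.1 ≠ f w.1 := fun h => hadj' (hf h)
        obtain ⟨t0, ht0⟩ := Function.ne_iff.mp hfne
        set S : Finset (Fin k) := Finset.univ.filter (fun t => f v.1 t ≠ f w.1 t) with hS
        have hSne : S.Nonempty := ⟨t0, by simp [hS, ht0]⟩
        refine ⟨S.min' hSne, v, w, rfl, hadj', ?_, ?_⟩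
        · have := S.min'_mem hSne
          simp only [hS, Finset.mem_filter] at this
          exact this.2
        · intro t' ht'
          by_contra hne'
          exact absurd (S.min'_le t' (by simp [hS, hne'])) (not_le.mpr ht')
  · -- each part is 2-colorable
    intro t
    refine ⟨SimpleGraph.Coloring.mk (fun v => if f v.1 t then 1 else 0) ?_⟩
    intro v w hadj
    rw [SimpleGraph.fromEdgeSet_adj] at hadj
    obtain ⟨⟨v', w', hs', -, hne', -⟩, -⟩ := hadj
    rw [Sym2.eq_iff] at hs'
    have : f v.1 t ≠ f w.1 t := by
      rcases hs' with ⟨h1, h2⟩ | ⟨h1, h2⟩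
      · rw [← h1, ← h2] at hne'; exact hne'
      · rw [← h1, ← h2] at hne'; exact fun h => hne' h.symm
    cases hv : f v.1 t <;> cases hw : f w.1 t <;> simp_all
end
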